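/- Let n ≥ 2, r ≥ 2, and let s = gcd(n−1, r+1). Then the rank of H_D over ℚ equals nr − (s − 1); equivalently, the corank of H_D is gcd(n−1, r+1) − 1. -/

import Mathlib

open Matrix

open Finset

lemma sum_block {s : ℕ} [NeZero s] (F : ZMod s → ℚ) (t : ℤ) :
    ∑ i ∈ Finset.range s, F ((t + i : ℤ)) = ∑ c, F c := by
  refine Finset.sum_nbij' (fun i => ((t + i : ℤ) : ZMod s))
    (fun c => ((c - (t : ZMod s))).val) ?_ ?_ ?_ ?_ ?_
  · intro a _; exact Finset.mem_univ _
  · intro c _; exact Finset.mem_range.2 (ZMod.val_lt _)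
  · intro a ha
    push_cast
    rw [add_sub_cancel_left]
    exact ZMod.val_natCast_of_lt (Finset.mem_range.1 ha)
  · intro c _
    push_cast
    rw [ZMod.natCast_val, ZMod.cast_id, add_sub_cancel]
  · intro a _; rfl

lemma sum_blocks {s : ℕ} [NeZero s] (F : ZMod s → ℚ) (k : ℕ) (t : ℤ) :
    ∑ i ∈ Finset.range (k * s), F ((t + i : ℤ)) = k * ∑ c, F c := by
  induction k generalizing t with
  | zero => simp
  | succ k ih =>
    rw [Nat.succ_mul, Finset.sum_range_add, ih t]
    have h2 : ∑ i ∈ Finset.range s, F ((t + k * s + i : ℤ)) = ∑ c, F c :=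
      sum_block F (t + k * s)
    have h3 : ∑ i ∈ Finset.range s, F ((t + (k * s + i : ℕ) : ℤ)) = ∑ c, F c := by
      rw [← h2]
      apply Finset.sum_congr rfl
      intro i _
      congr 1
      push_cast
      ring
    rw [h3]
    push_cast
    ring

lemma walk (g : ℤ → ℚ) (d : ℕ) (hd : 0 < d) (a b : ℤ)
    (hper : ∀ t, a ≤ t → t + d ≤ b → g t = g (t + d)) :
    ∀ (k : ℕ) (t : ℤ), a ≤ t → t + d * k ≤ b → g t = g (t + d * k) := by
  intro k
  induction k with
  | zero => simp
  | succ k ih =>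
    intro t ht htb
    have hk0 : (0:ℤ) ≤ (d:ℤ) * k := by positivity
    have h1 : g t = g (t + d) := hper t ht (by push_cast at htb ⊢; linarith)
    have h2 : g (t + d) = g (t + d + d * k) := by
      apply ih
      · linarith [Int.natCast_pos.2 hd]
      · push_cast at htb ⊢; linarith
    rw [h1, h2]; congr 1; push_cast; ring

lemma walk' (g : ℤ → ℚ) (d : ℕ) (hd : 0 < d) (a b : ℤ)
    (hper : ∀ t, a ≤ t → t + d ≤ b → g t = g (t + d))
    (t t' : ℤ) (ht : a ≤ t) (ht' : t' ≤ b) (hle : t ≤ t') (hdvd : (d:ℤ) ∣ t' - t) :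
    g t = g t' := by
  obtain ⟨k, hk⟩ := hdvd
  have hk0 : 0 ≤ k := by nlinarith [Int.natCast_pos.2 hd]
  lift k to ℕ using hk0 with k'
  have : t' = t + d * k' := by omega
  subst this
  exact walk g d hd a b hper k' t ht ht'

lemma fine_wilf : ∀ (N : ℕ), ∀ (d e : ℕ), d + e ≤ N → 0 < d → 0 < e →
    ∀ (g : ℤ → ℚ) (a b : ℤ),
    (∀ t, a ≤ t → t + d ≤ b → g t = g (t + d)) →
    (∀ t, a ≤ t → t + e ≤ b → g t = g (t + e)) →
    ((d:ℤ) + e - Nat.gcd d e ≤ b + 1 - a) →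
    ∀ t t', a ≤ t → t ≤ b → a ≤ t' → t' ≤ b → ((Nat.gcd d e : ℤ)) ∣ t' - t →
    g t = g t' := by
  intro N
  induction N with
  | zero => intro d e h hd he; omega
  | succ N ih =>
    intro d e hsum hd he g a b hperd hpere hlen t t' hta htb ht'a ht'b hdvd
    -- helper to close goals via walk' given a single-period divisibility
    by_cases hde : d ∣ e
    · -- gcd = d
      rw [Nat.gcd_eq_left hde] at hdvd
      rcases le_total t t' with hle | hle
      · exact walk' g d hd a b hperd t t' hta ht'b hle hdvd
      · exact (walk' g d hd a b hperd t' t ht'a htb hle (dvd_sub_comm.mp hdvd)).symm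
    · by_cases hed : e ∣ d
      · rw [Nat.gcd_eq_right hed] at hdvd
        rcases le_total t t' with hle | hle
        · exact walk' g e he a b hpere t t' hta ht'b hle hdvd
        · exact (walk' g e he a b hpere t' t ht'a htb hle (dvd_sub_comm.mp hdvd)).symm
      · -- wlog d < e by symmetry; handle both orders
        rcases lt_trichotomy d e with hlt | heq | hgt
        · -- d < e : recurse with (d, e - d) on [a, b - d]
          set s := Nat.gcd d e with hs
          have hsd : s ∣ d := Nat.gcd_dvd_left d e
          have hse : s ∣ e := Nat.gcd_dvd_right d e
          have hs0 : 0 < s := Nat.gcd_pos_of_pos_left _ hd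
          have hsed : s ∣ e - d := Nat.dvd_sub hse hsd
          have heds : s ≤ e - d := Nat.le_of_dvd (by omega) hsed
          have hgcd' : Nat.gcd d (e - d) = s := by
            rw [Nat.gcd_comm d (e-d), Nat.gcd_sub_self_left (le_of_lt hlt), Nat.gcd_comm]
          have hper' : ∀ u, a ≤ u → u + (e - d : ℕ) ≤ b - d → g u = g (u + (e - d : ℕ)) := by
            intro u hua hub
            have hcast : ((e - d : ℕ) : ℤ) = (e:ℤ) - d := by
              push_cast [Nat.cast_sub (le_of_lt hlt)]; ring
            rw [hcast] at hub ⊢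
            have h1 : g u = g (u + e) := hpere u hua (by omega)
            have h2 : g (u + e - d) = g (u + e - d + d) :=
              hperd (u + e - d) (by omega) (by omega)
            rw [h1]
            have : u + e - d + d = u + e := by ring
            rw [this] at h2
            rw [← h2]; congr 1; ring
          have hperd' : ∀ u, a ≤ u → u + d ≤ b - d → g u = g (u + d) := by
            intro u hua hub; exact hperd u hua (by omega)
          have ihc := ih d (e - d) (by omega) hd (by omega) g a (b - d) hperd' hper'
            (by rw [hgcd']; push_cast [Nat.cast_sub (le_of_lt hlt)]; omega)
          -- reduction into [a, b - d]
          have hred : ∀ (k : ℕ) (u : ℤ), u - a ≤ (k:ℤ) → a ≤ u → u ≤ b →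
              ∃ v, a ≤ v ∧ v ≤ b - d ∧ (d:ℤ) ∣ u - v ∧ g u = g v := by
            intro k
            induction k with
            | zero =>
              intro u hk hua hub
              refine ⟨u, hua, ?_, ⟨0, by ring⟩, rfl⟩
              have : u = a := by omega
              omega
            | succ k ihk =>
              intro u hk hua hub
              by_cases hcase : u ≤ b - d
              · exact ⟨u, hua, hcase, ⟨0, by ring⟩, rfl⟩
              · have hda : a ≤ u - d := by omega
                have hg : g (u - d) = g u := by
                  have := hperd (u - d) hda (by omega)
                  convert this using 2; ring
                obtain ⟨v, hv1, hv2, hv3, hv4⟩ := ihk (u - d) (by omega) hda (by omega)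
                refine ⟨v, hv1, hv2, ?_, by rw [← hg, hv4]⟩
                have h9 : u - v = ((u - d) - v) + d := by ring
                rw [h9]; exact dvd_add hv3 ⟨1, by ring⟩
          obtain ⟨u, hu1, hu2, hu3, hu4⟩ := hred (t - a).toNat t (by omega) hta htb
          obtain ⟨u', hu'1, hu'2, hu'3, hu'4⟩ := hred (t' - a).toNat t' (by omega) ht'a ht'b
          have hsdZ : (s:ℤ) ∣ (d:ℤ) := Int.natCast_dvd_natCast.2 hsd
          have : (s:ℤ) ∣ u' - u := by
            have h1 : (s:ℤ) ∣ t - u := dvd_trans hsdZ hu3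
            have h2 : (s:ℤ) ∣ t' - u' := dvd_trans hsdZ hu'3
            have : u' - u = (t' - t) - (t' - u') + (t - u) := by ring
            rw [this]; exact dvd_add (dvd_sub hdvd h2) h1
          rw [hu4, hu'4]
          exact ihc u u' hu1 hu2 hu'1 hu'2 (by rw [hgcd']; exact this)
        · exact absurd (heq ▸ dvd_refl d) hde
        · -- e < d : symmetric, recurse with (e, d - e) on [a, b - e]
          set s := Nat.gcd d e with hs
          have hsd : s ∣ d := Nat.gcd_dvd_left d e
          have hse : s ∣ e := Nat.gcd_dvd_right d e
          have hs0 : 0 < s := Nat.gcd_pos_of_pos_left _ hd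
          have hsed : s ∣ d - e := Nat.dvd_sub hsd hse
          have heds : s ≤ d - e := Nat.le_of_dvd (by omega) hsed
          have hgcd' : Nat.gcd e (d - e) = s := by
            rw [Nat.gcd_comm e (d-e), Nat.gcd_sub_self_left (le_of_lt hgt)]
          have hper' : ∀ u, a ≤ u → u + (d - e : ℕ) ≤ b - e → g u = g (u + (d - e : ℕ)) := by
            intro u hua hub
            have hcast : ((d - e : ℕ) : ℤ) = (d:ℤ) - e := by
              push_cast [Nat.cast_sub (le_of_lt hgt)]; ring
            rw [hcast] at hub ⊢
            have h1 : g u = g (u + d) := hperd u hua (by omega)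
            have h2 : g (u + d - e) = g (u + d - e + e) :=
              hpere (u + d - e) (by omega) (by omega)
            rw [h1]
            have h3 : u + d - e + e = u + d := by ring
            rw [h3] at h2
            rw [← h2]; congr 1; ring
          have hpere' : ∀ u, a ≤ u → u + e ≤ b - e → g u = g (u + e) := by
            intro u hua hub; exact hpere u hua (by omega)
          have ihc := ih e (d - e) (by omega) he (by omega) g a (b - e) hpere' hper'
            (by rw [hgcd']; push_cast [Nat.cast_sub (le_of_lt hgt)]; omega)
          have hred : ∀ (k : ℕ) (u : ℤ), u - a ≤ (k:ℤ) → a ≤ u → u ≤ b →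
              ∃ v, a ≤ v ∧ v ≤ b - e ∧ (e:ℤ) ∣ u - v ∧ g u = g v := by
            intro k
            induction k with
            | zero =>
              intro u hk hua hub
              refine ⟨u, hua, ?_, ⟨0, by ring⟩, rfl⟩
              have : u = a := by omega
              omega
            | succ k ihk =>
              intro u hk hua hub
              by_cases hcase : u ≤ b - e
              · exact ⟨u, hua, hcase, ⟨0, by ring⟩, rfl⟩
              · have hda : a ≤ u - e := by omega
                have hg : g (u - e) = g u := by
                  have := hpere (u - e) hda (by omega)
                  convert this using 2; ring
                obtain ⟨v, hv1, hv2, hv3, hv4⟩ := ihk (u - e) (by omega) hda (by omega)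
                refine ⟨v, hv1, hv2, ?_, by rw [← hg, hv4]⟩
                have h9 : u - v = ((u - e) - v) + e := by ring
                rw [h9]; exact dvd_add hv3 ⟨1, by ring⟩
          obtain ⟨u, hu1, hu2, hu3, hu4⟩ := hred (t - a).toNat t (by omega) hta htb
          obtain ⟨u', hu'1, hu'2, hu'3, hu'4⟩ := hred (t' - a).toNat t' (by omega) ht'a ht'b
          have hseZ : (s:ℤ) ∣ (e:ℤ) := Int.natCast_dvd_natCast.2 hse
          have : (s:ℤ) ∣ u' - u := by
            have h1 : (s:ℤ) ∣ t - u := dvd_trans hseZ hu3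
            have h2 : (s:ℤ) ∣ t' - u' := dvd_trans hseZ hu'3
            have h3 : u' - u = (t' - t) - (t' - u') + (t - u) := by ring
            rw [h3]; exact dvd_add (dvd_sub hdvd h2) h1
          rw [hu4, hu'4]
          exact ihc u u' hu1 hu2 hu'1 hu'2 (by rw [hgcd']; exact this)

lemma entry_eq (n r : ℕ) (HD : Matrix (Fin n × Fin r) (Fin n × Fin r) ℚ)
    (hHD' : ∀ (α β : Fin n) (j k : Fin r), HD (α, j) (β, k) =
      if α = β then 0 else if α < β then (if k ≤ j then (1:ℚ) else 0)
        else -(if j ≤ k then 1 else 0))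
    (x : Fin n × Fin r → ℚ) (y : ℕ → ℕ → ℚ)
    (hy : ∀ (β : Fin n) (k : Fin r), y β k = x (β, k))
    (α : Fin n) (j : Fin r) :
    HD.mulVec x (α, j) =
      (∑ b ∈ Finset.Ico ((α:ℕ)+1) n, ∑ k ∈ Finset.range ((j:ℕ)+1), y b k)
        - ∑ b ∈ Finset.range (α:ℕ), ∑ k ∈ Finset.Ico (j:ℕ) r, y b k := by
  have step1 : HD.mulVec x (α, j)
      = ∑ b ∈ Finset.range n, ∑ k ∈ Finset.range r,
          (if (α:ℕ) = b then 0 else if (α:ℕ) < b then (if k ≤ (j:ℕ) then y b k else 0)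
           else -(if (j:ℕ) ≤ k then y b k else 0)) := by
    rw [Matrix.mulVec, dotProduct, Fintype.sum_prod_type]
    rw [← Fin.sum_univ_eq_sum_range (fun b => ∑ k ∈ Finset.range r,
          (if (α:ℕ) = b then 0 else if (α:ℕ) < b then (if k ≤ (j:ℕ) then y b k else 0)
           else -(if (j:ℕ) ≤ k then y b k else 0))) n]
    apply Finset.sum_congr rfl
    intro β _
    rw [← Fin.sum_univ_eq_sum_range (fun k =>
          (if (α:ℕ) = (β:ℕ) then 0 else if (α:ℕ) < (β:ℕ) then (if k ≤ (j:ℕ) then y β k else 0)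
           else -(if (j:ℕ) ≤ k then y β k else 0))) r]
    apply Finset.sum_congr rfl
    intro k _
    rw [hHD' α β j k, hy β k]
    by_cases h1 : α = β
    · simp [h1, Fin.ext_iff.1 h1]
    · rw [if_neg h1, if_neg (fun hh => h1 (Fin.ext hh))]
      by_cases h2 : α < β
      · rw [if_pos h2, if_pos (Fin.lt_def.1 h2)]
        by_cases h3 : k ≤ j
        · rw [if_pos h3, if_pos (Fin.le_def.1 h3), one_mul]
        · rw [if_neg h3, if_neg (fun hh => h3 (Fin.le_def.2 hh)), zero_mul]
      · rw [if_neg h2, if_neg (fun hh => h2 (Fin.lt_def.2 hh))]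
        by_cases h3 : j ≤ k
        · rw [if_pos h3, if_pos (Fin.le_def.1 h3), neg_mul, one_mul]
        · rw [if_neg h3, if_neg (fun hh => h3 (Fin.le_def.2 hh)), neg_zero, zero_mul]
  rw [step1]
  have hαn : (α:ℕ) < n := α.isLt
  have hjr : (j:ℕ) < r := j.isLt
  rw [← Finset.sum_range_add_sum_Ico _ (le_of_lt hαn)]
  rw [Finset.sum_eq_sum_Ico_succ_bot hαn]
  have hmid : ∑ k ∈ Finset.range r,
      (if (α:ℕ) = (α:ℕ) then (0:ℚ) else if (α:ℕ) < (α:ℕ) then (if k ≤ (j:ℕ) then y α k else 0)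
           else -(if (j:ℕ) ≤ k then y α k else 0)) = 0 := by
    simp
  rw [hmid]
  have hlow : ∑ b ∈ Finset.range (α:ℕ), ∑ k ∈ Finset.range r,
      (if (α:ℕ) = b then (0:ℚ) else if (α:ℕ) < b then (if k ≤ (j:ℕ) then y b k else 0)
           else -(if (j:ℕ) ≤ k then y b k else 0))
      = -∑ b ∈ Finset.range (α:ℕ), ∑ k ∈ Finset.Ico (j:ℕ) r, y b k := by
    rw [← Finset.sum_neg_distrib]
    apply Finset.sum_congr rfl
    intro b hb
    have hbα : b < (α:ℕ) := Finset.mem_range.1 hb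
    rw [← Finset.sum_neg_distrib]
    rw [show Finset.Ico (j:ℕ) r = Finset.filter (fun k => (j:ℕ) ≤ k) (Finset.range r) by
      ext k; simp [Finset.mem_filter, Finset.mem_Ico]; omega]
    rw [Finset.sum_filter]
    apply Finset.sum_congr rfl
    intro k _
    rw [if_neg (by omega), if_neg (by omega)]
    split <;> simp
  have hhigh : ∑ b ∈ Finset.Ico ((α:ℕ)+1) n, ∑ k ∈ Finset.range r,
      (if (α:ℕ) = b then (0:ℚ) else if (α:ℕ) < b then (if k ≤ (j:ℕ) then y b k else 0)
           else -(if (j:ℕ) ≤ k then y b k else 0))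
      = ∑ b ∈ Finset.Ico ((α:ℕ)+1) n, ∑ k ∈ Finset.range ((j:ℕ)+1), y b k := by
    apply Finset.sum_congr rfl
    intro b hb
    have hbα : (α:ℕ) < b := by have := Finset.mem_Ico.1 hb; omega
    rw [show Finset.range ((j:ℕ)+1) = Finset.filter (fun k => k ≤ (j:ℕ)) (Finset.range r) by
      ext k; simp [Finset.mem_filter, Finset.mem_range]; omega]
    rw [Finset.sum_filter]
    apply Finset.sum_congr rfl
    intro k _
    rw [if_neg (by omega), if_pos hbα]
  rw [hlow, hhigh]
  ring

/-- The kernel equations. -/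
def Ey (n r : ℕ) (y : ℕ → ℕ → ℚ) (a j : ℕ) : Prop :=
  (∑ b ∈ Finset.Ico (a+1) n, ∑ k ∈ Finset.range (j+1), y b k)
    = ∑ b ∈ Finset.range a, ∑ k ∈ Finset.Ico j r, y b k

section relations
variable {n r : ℕ} {y : ℕ → ℕ → ℚ}

lemma L1 (hE : ∀ a j, a < n → j < r → Ey n r y a j) :
    ∀ a j, a + 1 < n → j < r →
      (∑ k ∈ Finset.range (j+1), y (a+1) k) + (∑ k ∈ Finset.Ico j r, y a k) = 0 := by
  intro a j ha hj
  have e1 := hE a j (by omega) hj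
  have e2 := hE (a+1) j ha hj
  unfold Ey at e1 e2
  rw [Finset.sum_eq_sum_Ico_succ_bot ha] at e1
  rw [Finset.sum_range_succ] at e2
  linarith

lemma L2 (hE : ∀ a j, a < n → j < r → Ey n r y a j) :
    ∀ a j, a + 1 < n → j + 1 < r → y (a+1) (j+1) = y a j := by
  intro a j ha hj
  have e1 := L1 hE a j ha (by omega)
  have e2 := L1 hE a (j+1) ha hj
  rw [Finset.sum_range_succ] at e2
  rw [Finset.sum_eq_sum_Ico_succ_bot (show j < r by omega)] at e1
  linarith

lemma L4 (hn : 2 ≤ n) (hE : ∀ a j, a < n → j < r → Ey n r y a j) :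
    ∀ j, j < r → ∑ b ∈ Finset.Ico 1 n, y b j = 0 := by
  intro j hj
  induction j with
  | zero =>
    have := hE 0 0 (by omega) hj
    unfold Ey at this
    simpa using this
  | succ j ih =>
    have e1 := hE 0 j (by omega) (by omega)
    have e2 := hE 0 (j+1) (by omega) hj
    unfold Ey at e1 e2
    simp only [Finset.range_zero, Finset.sum_empty] at e1 e2
    rw [show j+1+1 = (j+1)+1 from rfl] at e2
    have : ∑ b ∈ Finset.Ico 1 n, ∑ k ∈ Finset.range (j+1+1), y b k
        = ∑ b ∈ Finset.Ico 1 n, (∑ k ∈ Finset.range (j+1), y b k + y b (j+1)) := by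
      apply Finset.sum_congr rfl; intro b _; rw [Finset.sum_range_succ]
    rw [this, Finset.sum_add_distrib, e1] at e2
    linarith

lemma L5 (hn : 2 ≤ n) (hr : 2 ≤ r) (hE : ∀ a j, a < n → j < r → Ey n r y a j) :
    ∑ b ∈ Finset.range (n-1), y b (r-1) = 0 := by
  have := hE (n-1) (r-1) (by omega) (by omega)
  unfold Ey at this
  rw [show Finset.Ico (n-1+1) n = ∅ by rw [Finset.Ico_eq_empty_iff]; omega] at this
  simp only [Finset.sum_empty] at this
  have h2 : Finset.Ico (r-1) r = {r-1} := by
    ext k; simp [Finset.mem_Ico]; omega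
  rw [h2] at this
  simp only [Finset.sum_singleton] at this
  linarith

end relations

/-- Extension of `y` to the diagonal coordinate. -/
def gfun (y : ℕ → ℕ → ℚ) : ℤ → ℚ :=
  fun m => if 0 ≤ m then y m.toNat 0 else y 0 (-m).toNat

section gsec
variable {n r : ℕ} {y : ℕ → ℕ → ℚ}

lemma L3 (hE : ∀ a j, a < n → j < r → Ey n r y a j) :
    ∀ j a, a < n → j < r → y a j = gfun y ((a:ℤ) - (j:ℤ)) := by
  intro j
  induction j with
  | zero =>
    intro a ha _
    unfold gfun
    rw [if_pos (by omega)]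
    have h0 : ((a:ℤ) - ((0:ℕ):ℤ)).toNat = a := by omega
    rw [h0]
  | succ j ih =>
    intro a ha hj
    match a with
    | 0 =>
      unfold gfun
      rw [if_neg (by omega)]
      have h0 : (-(((0:ℕ):ℤ) - (((j:ℕ)+1:ℕ):ℤ))).toNat = j + 1 := by push_cast; omega
      rw [h0]
    | a + 1 =>
      rw [L2 hE a j ha hj, ih a (by omega) (by omega)]
      congr 1
      push_cast
      ring

lemma sum_desc (F : ℤ → ℚ) (L : ℕ) (c : ℤ) :
    ∑ i ∈ Finset.range L, F (c - i) = ∑ i ∈ Finset.range L, F (c - L + 1 + i) := by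
  rw [← Finset.sum_range_reflect (fun i => F (c - L + 1 + i)) L]
  apply Finset.sum_congr rfl
  intro i hi
  have hi' := Finset.mem_range.1 hi
  congr 1
  omega

lemma shift_sum (F : ℤ → ℚ) (L : ℕ) (t : ℤ) :
    (∑ i ∈ Finset.range L, F (t + 1 + i)) + F t
      = (∑ i ∈ Finset.range L, F (t + i)) + F (t + L) := by
  have h1 := Finset.sum_range_succ' (fun i => F (t + i)) L
  have h2 := Finset.sum_range_succ (fun i => F (t + i)) L
  have e1 : ∑ i ∈ Finset.range L, F (t + ↑(i+1)) = ∑ i ∈ Finset.range L, F (t+1+i) := by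
    apply Finset.sum_congr rfl; intro i _; congr 1; push_cast; ring
  rw [e1] at h1
  have e2 : F (t + ↑(0:ℕ)) = F t := by norm_num
  rw [e2] at h1
  linarith

lemma W_e (hn : 2 ≤ n) (hr : 2 ≤ r) (hE : ∀ a j, a < n → j < r → Ey n r y a j) :
    ∀ t : ℤ, 1 - (r:ℤ) ≤ t → t + r ≤ (n:ℤ) - 1 →
      ∑ i ∈ Finset.range (r+1), gfun y (t + i) = 0 := by
  intro t ht1 ht2
  set a : ℕ := (t + r - 1).toNat with hadef
  have ha : (a:ℤ) = t + r - 1 := by omega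
  have han : a + 1 < n := by omega
  have base := L1 hE a 0 han (by omega)
  rw [Finset.sum_range_one] at base
  rw [show Finset.Ico 0 r = Finset.range r by rw [Finset.range_eq_Ico]] at base
  rw [Finset.sum_range_succ]
  have hlast : gfun y (t + r) = y (a+1) 0 := by
    rw [L3 hE 0 (a+1) han (by omega)]
    congr 1; push_cast; omega
  have hrest : ∑ i ∈ Finset.range r, gfun y (t + i) = ∑ k ∈ Finset.range r, y a k := by
    rw [← Finset.sum_range_reflect (fun i => gfun y (t + i)) r]
    apply Finset.sum_congr rfl
    intro i hi
    have hi' := Finset.mem_range.1 hi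
    rw [L3 hE i a (by omega) hi']
    congr 1
    omega
  rw [hlast, hrest]
  linarith


lemma W_d (hn : 2 ≤ n) (hr : 2 ≤ r) (hE : ∀ a j, a < n → j < r → Ey n r y a j) :
    ∀ t : ℤ, 1 - (r:ℤ) ≤ t → t ≤ 1 →
      ∑ i ∈ Finset.range (n-1), gfun y (t + i) = 0 := by
  intro t ht1 ht2
  by_cases hcase : 2 - (r:ℤ) ≤ t
  · set j : ℕ := (1 - t).toNat with hjdef
    have hj : (j:ℤ) = 1 - t := by omega
    have hjr : j < r := by omega
    have base := L4 hn hE j hjr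
    rw [Finset.sum_Ico_eq_sum_range] at base
    rw [← base]
    apply Finset.sum_congr rfl
    intro i hi
    have hi' := Finset.mem_range.1 hi
    rw [L3 hE j (1+i) (by omega) hjr]
    congr 1
    push_cast
    omega
  · have ht : t = 1 - (r:ℤ) := by omega
    have base := L5 hn hr hE
    rw [← base]
    apply Finset.sum_congr rfl
    intro i hi
    have hi' := Finset.mem_range.1 hi
    rw [L3 hE (r-1) i (by omega) (by omega)]
    congr 1
    push_cast [Nat.cast_sub (show 1 ≤ r by omega)]
    omega

lemma per_e (hn : 2 ≤ n) (hr : 2 ≤ r) (hE : ∀ a j, a < n → j < r → Ey n r y a j) :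
    ∀ t : ℤ, 1 - (r:ℤ) ≤ t → t + (r+1) ≤ (n:ℤ) - 1 →
      gfun y t = gfun y (t + (r+1)) := by
  intro t ht1 ht2
  have w1 := W_e hn hr hE t ht1 (by omega)
  have w2 := W_e hn hr hE (t+1) (by omega) (by omega)
  have hs := shift_sum (gfun y) (r+1) t
  have e1 := w2
  rw [e1, w1] at hs
  have : gfun y (t + ((r:ℤ)+1)) = gfun y (t + ((r+1:ℕ):ℤ)) := by norm_cast
  rw [this]
  linarith

lemma per_d (hn : 2 ≤ n) (hr : 2 ≤ r) (hE : ∀ a j, a < n → j < r → Ey n r y a j) :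
    ∀ t : ℤ, 1 - (r:ℤ) ≤ t → t + ((n:ℤ)-1) ≤ (n:ℤ) - 1 →
      gfun y t = gfun y (t + ((n:ℤ)-1)) := by
  intro t ht1 ht2
  have w1 := W_d hn hr hE t ht1 (by omega)
  have w2 := W_d hn hr hE (t+1) (by omega) (by omega)
  have hs := shift_sum (gfun y) (n-1) t
  have e1 := w2
  rw [e1, w1] at hs
  have : gfun y (t + ((n:ℤ)-1)) = gfun y (t + ((n-1:ℕ):ℤ)) := by
    congr 1; push_cast [Nat.cast_sub (show 1 ≤ n by omega)]; ring
  rw [this]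
  linarith

end gsec

lemma forward {n r : ℕ} {y : ℕ → ℕ → ℚ} [NeZero (Nat.gcd (n-1) (r+1))] (hn : 2 ≤ n) (hr : 2 ≤ r)
    (hE : ∀ a j, a < n → j < r → Ey n r y a j) :
    ∃ f : ZMod (Nat.gcd (n-1) (r+1)) → ℚ, (∑ c, f c = 0) ∧
      ∀ a j, a < n → j < r →
        y a j = f ((((a:ℕ):ℤ) - ((j:ℕ):ℤ) : ℤ) : ZMod (Nat.gcd (n-1) (r+1))) := by
  set s := Nat.gcd (n-1) (r+1) with hsdef
  have hs0 : 0 < s := Nat.gcd_pos_of_pos_left _ (by omega)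
  have hsd : s ∣ n - 1 := Nat.gcd_dvd_left _ _
  have hse : s ∣ r + 1 := Nat.gcd_dvd_right _ _
  have hsn : s ≤ n - 1 := Nat.le_of_dvd (by omega) hsd
  set g := gfun y with hgdef
  have hcd : ((n-1:ℕ):ℤ) = (n:ℤ)-1 := by omega
  have hce : ((r+1:ℕ):ℤ) = (r:ℤ)+1 := by omega
  have hperd : ∀ t : ℤ, (1 - (r:ℤ)) ≤ t → t + ((n-1:ℕ):ℤ) ≤ ((n:ℤ) - 1) →
      g t = g (t + ((n-1:ℕ):ℤ)) := by
    intro t h1 h2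
    rw [hcd] at h2 ⊢
    exact per_d hn hr hE t h1 h2
  have hpere : ∀ t : ℤ, (1 - (r:ℤ)) ≤ t → t + ((r+1:ℕ):ℤ) ≤ ((n:ℤ) - 1) →
      g t = g (t + ((r+1:ℕ):ℤ)) := by
    intro t h1 h2
    rw [hce] at h2 ⊢
    exact per_e hn hr hE t h1 h2
  have hgcd : Nat.gcd (n-1) (r+1) = s := rfl
  have hcong := fine_wilf ((n-1)+(r+1)) (n-1) (r+1) le_rfl (by omega) (by omega)
    g (1 - (r:ℤ)) ((n:ℤ)-1) hperd hpere (by rw [hgcd]; omega)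
  rw [hgcd] at hcong
  -- canonical representative
  have h1 : ∀ m : ℤ, (1 - (r:ℤ)) ≤ m → m ≤ (n:ℤ) - 1 → g m = g (((m : ZMod s)).val) := by
    intro m hm1 hm2
    have hv : ((m : ZMod s)).val < s := ZMod.val_lt _
    have hveq : (((((m : ZMod s)).val : ℕ) : ℤ) : ZMod s) = (m : ZMod s) := by
      push_cast
      exact ZMod.natCast_rightInverse _
    have hdvd : (s:ℤ) ∣ ((((m : ZMod s)).val : ℕ) : ℤ) - m := by
      have hz : ((((((m : ZMod s)).val : ℕ) : ℤ) - m : ℤ) : ZMod s) = 0 := by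
        push_cast
        rw [sub_eq_zero]
        exact ZMod.natCast_rightInverse _
      exact (ZMod.intCast_zmod_eq_zero_iff_dvd _ _).1 hz
    exact hcong m _ hm1 hm2 (by omega) (by omega) hdvd
  refine ⟨fun c => g (c.val), ?_, ?_⟩
  · -- sum is zero
    obtain ⟨u, hu⟩ := hsd
    have hu0 : 0 < u := by
      rcases Nat.eq_zero_or_pos u with h | h
      · rw [h, Nat.mul_zero] at hu; omega
      · exact h
    have w := W_d hn hr hE 1 (by omega) le_rfl
    have e1 : ∀ i : ℕ, i ∈ Finset.range (n-1) →
        gfun y (1 + i) = (fun c : ZMod s => g (c.val)) (((1 + i : ℤ)) : ZMod s) := by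
      intro i hi
      have hi' := Finset.mem_range.1 hi
      exact h1 (1 + i) (by omega) (by omega)
    rw [Finset.sum_congr rfl e1] at w
    rw [show n - 1 = u * s by rw [hu, Nat.mul_comm]] at w
    rw [sum_blocks (fun c : ZMod s => g (c.val)) u 1] at w
    rcases mul_eq_zero.mp w with w | w
    · exact absurd w (by exact_mod_cast hu0.ne')
    · exact w
  · intro a j ha hj
    rw [L3 hE j a ha hj]
    exact h1 ((a:ℤ) - (j:ℤ)) (by omega) (by omega)

lemma backward {n r : ℕ} [NeZero (Nat.gcd (n-1) (r+1))] (hn : 2 ≤ n) (hr : 2 ≤ r)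
    (f : ZMod (Nat.gcd (n-1) (r+1)) → ℚ) (hf : ∑ c, f c = 0) :
    ∀ a j, a < n → j < r →
      Ey n r (fun a j => f ((((a:ℕ):ℤ) - ((j:ℕ):ℤ) : ℤ) : ZMod (Nat.gcd (n-1) (r+1)))) a j := by
  set F : ℤ → ℚ := fun m => f ((m : ZMod (Nat.gcd (n-1) (r+1)))) with hFdef
  set Y : ℕ → ℕ → ℚ := fun a j => F ((a:ℤ) - (j:ℤ)) with hYdef
  have hsd : Nat.gcd (n-1) (r+1) ∣ n - 1 := Nat.gcd_dvd_left _ _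
  have hse : Nat.gcd (n-1) (r+1) ∣ r + 1 := Nat.gcd_dvd_right _ _
  have winD : ∀ t : ℤ, ∑ i ∈ Finset.range (n-1), F (t + i) = 0 := by
    intro t
    obtain ⟨u, hu⟩ := hsd
    have hnu : n - 1 = u * Nat.gcd (n-1) (r+1) := hu.trans (Nat.mul_comm _ _)
    rw [hnu, sum_blocks f u t, hf, mul_zero]
  have winE : ∀ t : ℤ, ∑ i ∈ Finset.range (r+1), F (t + i) = 0 := by
    intro t
    obtain ⟨v, hv⟩ := hse
    have hnv : r + 1 = v * Nat.gcd (n-1) (r+1) := hv.trans (Nat.mul_comm _ _)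
    rw [hnv, sum_blocks f v t, hf, mul_zero]
  -- base case a = n-1
  have base : ∀ j, j < r → Ey n r Y (n-1) j := by
    intro j hj
    unfold Ey
    rw [show n - 1 + 1 = n by omega, Finset.Ico_self, Finset.sum_empty]
    rw [Finset.sum_comm]
    symm
    apply Finset.sum_eq_zero
    intro k _
    have : ∑ b ∈ Finset.range (n-1), Y b k = ∑ i ∈ Finset.range (n-1), F (-(k:ℤ) + i) := by
      apply Finset.sum_congr rfl
      intro b _
      show F ((b:ℤ) - (k:ℤ)) = F (-(k:ℤ) + b)
      congr 1; ring
    rw [this, winD]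
  -- downward induction
  have key : ∀ (i a : ℕ), a + i = n - 1 → ∀ j, j < r → Ey n r Y a j := by
    intro i
    induction i with
    | zero =>
      intro a ha j hj
      rw [show a = n - 1 by omega]
      exact base j hj
    | succ i ih =>
      intro a ha j hj
      have hstep := ih (a+1) (by omega) j hj
      unfold Ey at hstep ⊢
      have hA : ∑ b ∈ Finset.Ico (a+1) n, ∑ k ∈ Finset.range (j+1), Y b k
          = (∑ k ∈ Finset.range (j+1), Y (a+1) k)
            + ∑ b ∈ Finset.Ico (a+1+1) n, ∑ k ∈ Finset.range (j+1), Y b k :=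
        Finset.sum_eq_sum_Ico_succ_bot (by omega) _
      have hB : ∑ b ∈ Finset.range (a+1), ∑ k ∈ Finset.Ico j r, Y b k
          = (∑ b ∈ Finset.range a, ∑ k ∈ Finset.Ico j r, Y b k)
            + ∑ k ∈ Finset.Ico j r, Y a k :=
        Finset.sum_range_succ _ _
      -- the r+1 window split
      have hwin := winE ((a:ℤ) + 1 - r)
      rw [show r + 1 = (r - j) + (j + 1) by omega, Finset.sum_range_add] at hwin
      have hp1 : ∑ k ∈ Finset.range (j+1), Y (a+1) k
          = ∑ i ∈ Finset.range (j+1), F ((a:ℤ) + 1 - r + ((r-j) + i : ℕ)) := by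
        have d1 : ∑ k ∈ Finset.range (j+1), Y (a+1) k
            = ∑ k ∈ Finset.range (j+1), F (((a:ℤ)+1) - k) := by
          apply Finset.sum_congr rfl
          intro k _
          show F (((a+1:ℕ):ℤ) - (k:ℤ)) = F (((a:ℤ)+1) - k)
          congr 1 <;> omega
        rw [d1, sum_desc F (j+1) ((a:ℤ)+1)]
        apply Finset.sum_congr rfl
        intro i hi
        have hi' := Finset.mem_range.1 hi
        congr 1
        omega
      have hp2 : ∑ k ∈ Finset.Ico j r, Y a k
          = ∑ i ∈ Finset.range (r-j), F ((a:ℤ) + 1 - r + i) := by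
        rw [Finset.sum_Ico_eq_sum_range]
        have d1 : ∑ i ∈ Finset.range (r-j), Y a (j+i)
            = ∑ i ∈ Finset.range (r-j), F (((a:ℤ)-j) - i) := by
          apply Finset.sum_congr rfl
          intro i _
          show F (((a:ℕ):ℤ) - ((j+i:ℕ):ℤ)) = F (((a:ℤ)-j) - i)
          congr 1 <;> omega
        rw [d1, sum_desc F (r-j) ((a:ℤ)-(j:ℤ))]
        apply Finset.sum_congr rfl
        intro i hi
        have hi' := Finset.mem_range.1 hi
        congr 1
        omega
      rw [hA, hstep, hB, hp1, hp2]
      linarith [hwin]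
  intro a j ha hj
  exact key (n - 1 - a) a (by omega) j hj

/-- the corank of the Dipper–Donkin matrix `H_D` is
`gcd(n-1, r+1) - 1`, i.e. its rank is `nr - (gcd(n-1,r+1) - 1)`. -/
theorem stmt_3 (n r : ℕ) (hn : 2 ≤ n) (hr : 2 ≤ r)
    (Mr Nr : Matrix (Fin r) (Fin r) ℚ)
    (hMr : ∀ i j : Fin r, Mr i j = if j ≤ i then 1 else 0)
    (hNr : Nr = -Mrᵀ)
    (HD : Matrix (Fin n × Fin r) (Fin n × Fin r) ℚ)
    (hHD : ∀ (α β : Fin n) (j k : Fin r), HD (α, j) (β, k) =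
      if α = β then 0 else if α < β then Mr j k else Nr j k) :
    HD.rank = n * r - (Nat.gcd (n - 1) (r + 1) - 1) := by
  classical
  have hs0 : 0 < Nat.gcd (n-1) (r+1) := Nat.gcd_pos_of_pos_left _ (by omega)
  haveI : NeZero (Nat.gcd (n-1) (r+1)) := ⟨by omega⟩
  have hsn : Nat.gcd (n-1) (r+1) ≤ n - 1 := Nat.le_of_dvd (by omega) (Nat.gcd_dvd_left _ _)
  have hHD' : ∀ (α β : Fin n) (j k : Fin r), HD (α, j) (β, k) =
      if α = β then 0 else if α < β then (if k ≤ j then (1:ℚ) else 0)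
        else -(if j ≤ k then 1 else 0) := by
    intro α β j k
    rw [hHD, hNr, hMr]
    simp only [Matrix.neg_apply, Matrix.transpose_apply, hMr]
  set Φ : (ZMod (Nat.gcd (n-1) (r+1)) → ℚ) →ₗ[ℚ] ((Fin n × Fin r) → ℚ) :=
    { toFun := fun f p => f (((((p.1:ℕ):ℤ) - ((p.2:ℕ):ℤ)) : ℤ) : ZMod (Nat.gcd (n-1) (r+1)))
      map_add' := fun f g => rfl
      map_smul' := fun c f => rfl } with hΦdef
  set σ : (ZMod (Nat.gcd (n-1) (r+1)) → ℚ) →ₗ[ℚ] ℚ :=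
    { toFun := fun f => ∑ c, f c
      map_add' := fun f g => by simp [Finset.sum_add_distrib]
      map_smul' := fun c f => by simp [Finset.mul_sum] } with hσdef
  have hΦinj : Function.Injective Φ := by
    intro f1 f2 h
    funext c
    have hc : (c.val) < n := by have := ZMod.val_lt c; omega
    have h2 := congrFun h (⟨c.val, hc⟩, ⟨0, by omega⟩)
    have harg : (((((c.val : ℕ):ℤ) - (((0:ℕ)):ℤ)) : ℤ) : ZMod (Nat.gcd (n-1) (r+1))) = c := by
      push_cast
      simp only [sub_zero]
      exact ZMod.natCast_rightInverse _
    simpa only [hΦdef, LinearMap.coe_mk, AddHom.coe_mk, harg] using h2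
  have hker : LinearMap.ker HD.mulVecLin = Submodule.map Φ (LinearMap.ker σ) := by
    ext x
    simp only [LinearMap.mem_ker, Submodule.mem_map, Matrix.mulVecLin_apply]
    constructor
    · intro hx
      set y : ℕ → ℕ → ℚ :=
        fun b k => if h : b < n ∧ k < r then x (⟨b, h.1⟩, ⟨k, h.2⟩) else 0 with hydef
      have hy : ∀ (β : Fin n) (k : Fin r), y β k = x (β, k) := by
        intro β k
        have hb := β.isLt
        have hk := k.isLt
        simp only [hydef, dif_pos (And.intro hb hk)]
      have hE : ∀ a j, a < n → j < r → Ey n r y a j := by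
        intro a j ha hj
        have h0 : HD.mulVec x (⟨a,ha⟩, ⟨j,hj⟩) = 0 := by rw [hx]; rfl
        rw [entry_eq n r HD hHD' x y hy ⟨a,ha⟩ ⟨j,hj⟩] at h0
        have h1 := sub_eq_zero.mp h0
        exact h1
      obtain ⟨f, hf0, hfy⟩ := forward hn hr hE
      refine ⟨f, ?_, ?_⟩
      · exact hf0
      · funext p
        obtain ⟨α, j⟩ := p
        have h2 := hfy α j α.isLt j.isLt
        rw [hy α j] at h2
        exact h2.symm
    · rintro ⟨f, hf, rfl⟩
      have hB := backward hn hr f hf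
      funext p
      obtain ⟨α, j⟩ := p
      show HD.mulVec (Φ f) (α, j) = 0
      set y : ℕ → ℕ → ℚ :=
        fun a j => f ((((a:ℕ):ℤ) - ((j:ℕ):ℤ) : ℤ) : ZMod (Nat.gcd (n-1) (r+1))) with hydef
      have hy : ∀ (β : Fin n) (k : Fin r), y β k = Φ f (β, k) := fun β k => rfl
      rw [entry_eq n r HD hHD' (Φ f) y hy α j]
      have h3 := hB α j α.isLt j.isLt
      unfold Ey at h3
      rw [h3]
      ring
  have hrn := LinearMap.finrank_range_add_finrank_ker HD.mulVecLin
  have hdom : Module.finrank ℚ ((Fin n × Fin r) → ℚ) = n * r := by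
    rw [Module.finrank_fintype_fun_eq_card, Fintype.card_prod, Fintype.card_fin, Fintype.card_fin]
  have hσtop : LinearMap.range σ = ⊤ := by
    rw [LinearMap.range_eq_top]
    intro q
    refine ⟨fun _ => q / (Nat.gcd (n-1) (r+1) : ℚ), ?_⟩
    show ∑ _c : ZMod (Nat.gcd (n-1) (r+1)), q / (Nat.gcd (n-1) (r+1) : ℚ) = q
    rw [Finset.sum_const, Finset.card_univ, ZMod.card, nsmul_eq_mul]
    field_simp
  have hkσ := LinearMap.finrank_range_add_finrank_ker σ
  rw [hσtop, finrank_top] at hkσ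
  have hdomσ : Module.finrank ℚ (ZMod (Nat.gcd (n-1) (r+1)) → ℚ) = Nat.gcd (n-1) (r+1) := by
    rw [Module.finrank_fintype_fun_eq_card, ZMod.card]
  have hfrQ : Module.finrank ℚ ℚ = 1 := Module.finrank_self ℚ
  have hkerσ : Module.finrank ℚ (LinearMap.ker σ) = Nat.gcd (n-1) (r+1) - 1 := by omega
  have hkerHD : Module.finrank ℚ (LinearMap.ker HD.mulVecLin) = Nat.gcd (n-1) (r+1) - 1 := by
    rw [hker, ← hkerσ]
    exact (Submodule.equivMapOfInjective Φ hΦinj (LinearMap.ker σ)).symm.finrank_eq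
  have hrdef : HD.rank = Module.finrank ℚ (LinearMap.range HD.mulVecLin) := rfl
  rw [hrdef]
  rw [hdom, hkerHD] at hrn
  omega
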